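/- Let N ≥ 1, let {ψ_j}_{j=1}^N be an orthonormal basis of ℂ^N, let λ̃₁, …, λ̃_N ≥ 0, and define the operator H = ∑_{j=1}^N λ̃_j ψ_j ψ_j^* (so H ψ_j = λ̃_j ψ_j). Let ξ ∈ ℂ^N with ‖ξ‖₂ = 1, let λ ∈ ℂ, and fix an index i. Assume: (a) ‖ψ_i − ξ‖₂ ≤ ε_v; (b) |1 − λ λ̃_i| ≤ ε_λ; (c) |λ| λ̃_j ≤ K for every j = 1, …, N. Then the approximation error of H on the pair (λ, ξ) satisfies ‖ξ − H(λ ξ)‖₂ ≤ (1 + K) ε_v + ε_λ. -/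

import Mathlib

open Matrix

/-- The Euclidean (ℓ²) norm on ℂ^N. -/
noncomputable def l2norm {N : ℕ} (x : Fin N → ℂ) : ℝ :=
  Real.sqrt (∑ i, ‖x i‖ ^ 2)

lemma l2norm_eq {N : ℕ} (x : Fin N → ℂ) :
    l2norm x = ‖(WithLp.equiv 2 (Fin N → ℂ)).symm x‖ := by
  rw [EuclideanSpace.norm_eq]; rfl

lemma l2norm_add_le {N : ℕ} (x y : Fin N → ℂ) :
    l2norm (x + y) ≤ l2norm x + l2norm y := by
  rw [l2norm_eq, l2norm_eq, l2norm_eq]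
  exact norm_add_le ((WithLp.equiv 2 (Fin N → ℂ)).symm x) ((WithLp.equiv 2 (Fin N → ℂ)).symm y)

lemma l2norm_sub_rev {N : ℕ} (x y : Fin N → ℂ) : l2norm (x - y) = l2norm (y - x) := by
  simp [l2norm, norm_sub_rev]

lemma l2norm_smul {N : ℕ} (c : ℂ) (x : Fin N → ℂ) : l2norm (c • x) = ‖c‖ * l2norm x := by
  rw [l2norm_eq, l2norm_eq]
  exact norm_smul c ((WithLp.equiv 2 (Fin N → ℂ)).symm x)

lemma l2norm_unit {N : ℕ} (ψ : Fin N → Fin N → ℂ) (i : Fin N)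
    (h_on : ∀ j k : Fin N, star (ψ j) ⬝ᵥ ψ k = if j = k then 1 else 0) :
    l2norm (ψ i) = 1 := by
  have h := h_on i i
  rw [if_pos rfl] at h
  simp only [dotProduct, Pi.star_apply] at h
  have h2 : ((∑ l, ‖ψ i l‖ ^ 2 : ℝ) : ℂ) = 1 := by
    push_cast
    rw [← h]
    apply Finset.sum_congr rfl
    intro l _
    rw [RCLike.star_def, Complex.conj_mul']
  have h3 : (∑ l, ‖ψ i l‖ ^ 2 : ℝ) = 1 := by exact_mod_cast h2
  rw [l2norm, h3, Real.sqrt_one]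

lemma mulVec_eq_aux {N : ℕ} (ψ : Fin N → Fin N → ℂ) (lamTilde : Fin N → ℝ)
    (H : Matrix (Fin N) (Fin N) ℂ)
    (hH : H = ∑ j : Fin N, (lamTilde j : ℂ) • Matrix.vecMulVec (ψ j) (star (ψ j)))
    (v : Fin N → ℂ) :
    H.mulVec v = ∑ j : Fin N, ((lamTilde j : ℂ) * (star (ψ j) ⬝ᵥ v)) • ψ j := by
  subst hH
  funext k
  simp only [mulVec, dotProduct, Matrix.sum_apply, Finset.sum_apply, Pi.smul_apply,
    Matrix.smul_apply, Matrix.vecMulVec_apply, Pi.star_apply, smul_eq_mul, Finset.sum_mul,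
    Finset.mul_sum]
  rw [Finset.sum_comm]
  apply Finset.sum_congr rfl; intro j _
  apply Finset.sum_congr rfl; intro l _
  simp [RCLike.star_def]; ring

lemma l2norm_opNorm_bound {N : ℕ} (hN : 1 ≤ N) (ψ : Fin N → Fin N → ℂ)
    (h_on : ∀ j k : Fin N, star (ψ j) ⬝ᵥ ψ k = if j = k then 1 else 0)
    (lamTilde : Fin N → ℝ) (hlam : ∀ j, 0 ≤ lamTilde j)
    (H : Matrix (Fin N) (Fin N) ℂ)
    (hH : H = ∑ j : Fin N, (lamTilde j : ℂ) • Matrix.vecMulVec (ψ j) (star (ψ j)))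
    (lam : ℂ) (K : ℝ) (hc : ∀ j : Fin N, ‖lam‖ * lamTilde j ≤ K)
    (w : Fin N → ℂ) :
    l2norm (lam • H.mulVec w) ≤ K * l2norm w := by
  have : Nonempty (Fin N) := ⟨⟨0, hN⟩⟩
  have hK : 0 ≤ K := le_trans (mul_nonneg (norm_nonneg _) (hlam _)) (hc ⟨0, hN⟩)
  set φ := (WithLp.linearEquiv 2 ℂ (Fin N → ℂ)).symm with hφ
  set e : Fin N → EuclideanSpace ℂ (Fin N) := fun j => φ (ψ j) with he
  have horth : Orthonormal ℂ e := by
    rw [orthonormal_iff_ite]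
    intro j k
    rw [← h_on j k]
    simp [he, hφ, PiLp.inner_apply, dotProduct, mul_comm]
  have hcard : Fintype.card (Fin N) = Module.finrank ℂ (EuclideanSpace ℂ (Fin N)) := by simp
  set bb := basisOfLinearIndependentOfCardEqFinrank horth.linearIndependent hcard with hbbdef
  have hbb : ⇑bb = e := coe_basisOfLinearIndependentOfCardEqFinrank _ _
  set b := bb.toOrthonormalBasis (by rwa [hbb]) with hbdef
  have hb : ⇑b = e := by rw [hbdef, Module.Basis.coe_toOrthonormalBasis, hbb]
  set wE := φ w with hwE
  have hdot : ∀ j, star (ψ j) ⬝ᵥ w = inner ℂ (e j) wE := by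
    intro j
    simp [he, hwE, hφ, PiLp.inner_apply, dotProduct, RCLike.inner_apply, mul_comm]
  have hu : φ (lam • H.mulVec w) =
      ∑ j : Fin N, (lam * ((lamTilde j : ℂ) * inner ℂ (e j) wE)) • e j := by
    rw [mulVec_eq_aux ψ lamTilde H hH]
    rw [_root_.map_smul, map_sum]
    rw [Finset.smul_sum]
    apply Finset.sum_congr rfl; intro j _
    rw [_root_.map_smul, hdot j, smul_smul]
  have hrepr : ∀ k, b.repr (φ (lam • H.mulVec w)) k
      = lam * ((lamTilde k : ℂ) * inner ℂ (e k) wE) := by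
    intro k
    rw [OrthonormalBasis.repr_apply_apply, hu]
    have := horth.inner_right_fintype (fun j => lam * ((lamTilde j : ℂ) * inner ℂ (e j) wE)) k
    rw [hb]; exact this
  have hreprw : ∀ k, b.repr wE k = inner ℂ (e k) wE := by
    intro k; rw [OrthonormalBasis.repr_apply_apply, hb]
  have h1 : l2norm (lam • H.mulVec w) = Real.sqrt (∑ k, ‖b.repr (φ (lam • H.mulVec w)) k‖ ^ 2) := by
    rw [l2norm_eq]
    rw [show ((WithLp.equiv 2 (Fin N → ℂ)).symm (lam • H.mulVec w)) = φ (lam • H.mulVec w) from rfl]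
    rw [← b.repr.norm_map, EuclideanSpace.norm_eq]
  have h2 : l2norm w = Real.sqrt (∑ k, ‖b.repr wE k‖ ^ 2) := by
    rw [l2norm_eq]
    rw [show ((WithLp.equiv 2 (Fin N → ℂ)).symm w) = wE from rfl]
    rw [← b.repr.norm_map, EuclideanSpace.norm_eq]
  rw [h1, h2]
  rw [show K * Real.sqrt (∑ k, ‖b.repr wE k‖ ^ 2)
      = Real.sqrt (∑ k, K ^ 2 * ‖b.repr wE k‖ ^ 2) from by
    rw [← Finset.mul_sum, Real.sqrt_mul (by positivity), Real.sqrt_sq hK]]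
  apply Real.sqrt_le_sqrt
  apply Finset.sum_le_sum
  intro k _
  rw [hrepr k, hreprw k]
  have heq : ‖lam * ((lamTilde k : ℂ) * inner ℂ (e k) wE)‖
      = (‖lam‖ * lamTilde k) * ‖(inner ℂ (e k) wE : ℂ)‖ := by
    simp [norm_mul, Complex.norm_real, abs_of_nonneg (hlam k)]; ring
  rw [heq, mul_pow]
  have h3 : (‖lam‖ * lamTilde k) ^ 2 ≤ K ^ 2 := by
    apply sq_le_sq' _ (hc k)
    nlinarith [hc k, norm_nonneg lam, hlam k]
  nlinarith [norm_nonneg (inner ℂ (e k) wE : ℂ), sq_nonneg (‖(inner ℂ (e k) wE : ℂ)‖)]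

/-- **Meta-subnet requirements imply the approximation property of `H`.**
Let `{ψ_j}` be an orthonormal basis of ℂ^N, let `λ̃_j ≥ 0`, and let
`H = ∑_j λ̃_j ψ_j ψ_j*` be the operator diagonal in this basis. If `‖ψ_i − ξ‖₂ ≤ ε_v`
(with `‖ξ‖₂ = 1`), `|1 − λ λ̃_i| ≤ ε_λ`, and `|λ| λ̃_j ≤ K` for all `j`, then
`‖ξ − H (λ ξ)‖₂ ≤ (1 + K) ε_v + ε_λ`. -/
theorem meta_requirements_imply_H_approximation
    {N : ℕ} (hN : 1 ≤ N)
    (ψ : Fin N → Fin N → ℂ)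
    (h_on : ∀ j k : Fin N, star (ψ j) ⬝ᵥ ψ k = if j = k then 1 else 0)
    (lamTilde : Fin N → ℝ) (hlam : ∀ j, 0 ≤ lamTilde j)
    (H : Matrix (Fin N) (Fin N) ℂ)
    (hH : H = ∑ j : Fin N, (lamTilde j : ℂ) • Matrix.vecMulVec (ψ j) (star (ψ j)))
    (ξ : Fin N → ℂ) (hξ : l2norm ξ = 1)
    (lam : ℂ) (i : Fin N)
    (εv εl K : ℝ)
    (ha : l2norm (ψ i - ξ) ≤ εv)
    (hb : ‖1 - lam * (lamTilde i : ℂ)‖ ≤ εl)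
    (hc : ∀ j : Fin N, ‖lam‖ * lamTilde j ≤ K) :
    l2norm (ξ - H.mulVec (lam • ξ)) ≤ (1 + K) * εv + εl := by
  have hK : 0 ≤ K := le_trans (mul_nonneg (norm_nonneg _) (hlam _)) (hc ⟨0, hN⟩)
  have hψi : H.mulVec (ψ i) = (lamTilde i : ℂ) • ψ i := by
    rw [mulVec_eq_aux ψ lamTilde H hH]
    rw [Finset.sum_eq_single i]
    · rw [h_on i i, if_pos rfl, mul_one]
    · intro j _ hj; rw [h_on j i, if_neg hj, mul_zero, zero_smul]
    · intro h; exact absurd (Finset.mem_univ i) h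
  have hdecomp : ξ - H.mulVec (lam • ξ)
      = (ξ - ψ i) + ((1 - lam * (lamTilde i : ℂ)) • ψ i + lam • H.mulVec (ψ i - ξ)) := by
    have h1 : H.mulVec (lam • ξ) = lam • H.mulVec ξ := by rw [Matrix.mulVec_smul]
    have h2 : H.mulVec (ψ i - ξ) = (lamTilde i : ℂ) • ψ i - H.mulVec ξ := by
      rw [Matrix.mulVec_sub, hψi]
    rw [h1, h2]
    module
  have t1 : l2norm (ξ - ψ i) ≤ εv := by rw [l2norm_sub_rev]; exact ha
  have t2 : l2norm ((1 - lam * (lamTilde i : ℂ)) • ψ i) ≤ εl := by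
    rw [l2norm_smul, l2norm_unit ψ i h_on, mul_one]; exact hb
  have t3 : l2norm (lam • H.mulVec (ψ i - ξ)) ≤ K * εv := by
    calc l2norm (lam • H.mulVec (ψ i - ξ)) ≤ K * l2norm (ψ i - ξ) :=
          l2norm_opNorm_bound hN ψ h_on lamTilde hlam H hH lam K hc (ψ i - ξ)
      _ ≤ K * εv := by
          exact mul_le_mul_of_nonneg_left ha hK
  calc l2norm (ξ - H.mulVec (lam • ξ))
      = l2norm ((ξ - ψ i) + ((1 - lam * (lamTilde i : ℂ)) • ψ i + lam • H.mulVec (ψ i - ξ))) := by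
        rw [hdecomp]
    _ ≤ l2norm (ξ - ψ i)
        + l2norm ((1 - lam * (lamTilde i : ℂ)) • ψ i + lam • H.mulVec (ψ i - ξ)) :=
          l2norm_add_le _ _
    _ ≤ l2norm (ξ - ψ i)
        + (l2norm ((1 - lam * (lamTilde i : ℂ)) • ψ i) + l2norm (lam • H.mulVec (ψ i - ξ))) := by
          exact add_le_add le_rfl (l2norm_add_le _ _)
    _ ≤ εv + (εl + K * εv) := by
          exact add_le_add t1 (add_le_add t2 t3)
    _ = (1 + K) * εv + εl := by ring
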